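/- For every nonzero complex number c, there exists a tuple (y_{i,j})_{(i,j)∈B(m)} of nonzero complex numbers solving ℓ_{(i,j)}(y) = 0 for all (i,j) ∈ B(m), such that y_{i,j} · y_{j,i} = c² for all i,j, y_{m,m} = c, and y_{i,i} = ±c for all 1 ≤ i < m. -/

import Mathlib

/-- Extension of a tuple `y` on `B(m)` by `0` outside; with Lean's `x / 0 = 0` convention
this encodes the boundary conventions `y_{0,•} = 0`, `y_{•,0} = ∞`, `y_{m,s} = 0` for
`s > m`, `y_{r,m} = ∞` for `r > m`. -/
noncomputable def extY (m : ℕ) (y : ℕ → ℕ → ℂ) (i j : ℕ) : ℂ :=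
  if 1 ≤ i ∧ 1 ≤ j ∧ i ≤ m ∧ j ≤ m then y i j else 0

/-- `ℓ_{(i,j)}(y)` with boundary conventions. -/
noncomputable def ell (m : ℕ) (y : ℕ → ℕ → ℂ) (i j : ℕ) : ℂ :=
  - extY m y i (j + 1) / extY m y i j - extY m y (i - 1) j / extY m y i j
    + extY m y i j / extY m y (i + 1) j + extY m y i j / extY m y i (j - 1)

/-- The explicit solution:
`y i j = (-1)^(m+1) * c * (j-1)! / (i-1)!` if `i + j ≤ m`, and
`y i j = (-1)^(i+j) * c * (m-i)! / (m-j)!` otherwise. -/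
noncomputable def Ysol (m : ℕ) (c : ℂ) (i j : ℕ) : ℂ :=
  if i + j ≤ m then (-1) ^ (m + 1) * c * (Nat.factorial (j - 1) : ℕ) / (Nat.factorial (i - 1) : ℕ)
  else (-1) ^ (i + j) * c * (Nat.factorial (m - i) : ℕ) / (Nat.factorial (m - j) : ℕ)

lemma factC_ne (n : ℕ) : ((Nat.factorial n : ℕ) : ℂ) ≠ 0 := by
  exact_mod_cast Nat.factorial_ne_zero n

lemma Ysol_ne_zero {m : ℕ} {c : ℂ} (hc : c ≠ 0) (i j : ℕ) : Ysol m c i j ≠ 0 := by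
  unfold Ysol
  split_ifs <;>
  · apply div_ne_zero _ (factC_ne _)
    exact mul_ne_zero (mul_ne_zero (pow_ne_zero _ (by norm_num)) hc) (factC_ne _)

/-- Right-ratio identity: `y i (j+1) = r * y i j`. -/
lemma keyR (m : ℕ) (c : ℂ) (i j : ℕ) (hi : 1 ≤ i) (him : i ≤ m) (hj : 1 ≤ j)
    (hjm : j + 1 ≤ m) :
    Ysol m c i (j + 1) =
      (if i + j ≤ m then (j : ℂ) else (j : ℂ) - (m : ℂ)) * Ysol m c i j := by
  obtain ⟨a, rfl⟩ : ∃ a, i = a + 1 := ⟨i - 1, by omega⟩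
  obtain ⟨b, rfl⟩ : ∃ b, j = b + 1 := ⟨j - 1, by omega⟩
  unfold Ysol
  by_cases h1 : a + 1 + (b + 1 + 1) ≤ m
  · have h2 : a + 1 + (b + 1) ≤ m := by omega
    rw [if_pos h1, if_pos h2, if_pos h2]
    simp only [Nat.add_sub_cancel]
    rw [Nat.factorial_succ]
    push_cast
    ring
  · by_cases h2 : a + 1 + (b + 1) ≤ m
    · -- the anti-diagonal crossing case : a + b + 2 = m
      have hmeq : m = a + b + 2 := by omega
      subst hmeq
      rw [if_neg h1, if_pos h2, if_pos h2]
      simp only [Nat.add_sub_cancel]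
      have e1 : a + b + 2 - (a + 1) = b + 1 := by omega
      have e2 : a + b + 2 - (b + 1 + 1) = a := by omega
      have e3 : a + 1 + (b + 1 + 1) = (a + b + 2) + 1 := by omega
      rw [e1, e2, e3, Nat.factorial_succ]
      push_cast
      ring
    · -- both below the anti-diagonal
      obtain ⟨k, rfl⟩ : ∃ k, m = b + 1 + 1 + k := ⟨m - (b + 1 + 1), by omega⟩
      rw [if_neg h1, if_neg h2, if_neg h2]
      have e1 : b + 1 + 1 + k - (b + 1 + 1) = k := by omega
      have e2 : b + 1 + 1 + k - (b + 1) = k + 1 := by omega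
      have e3 : a + 1 + (b + 1 + 1) = (a + 1 + (b + 1)) + 1 := by omega
      rw [e1, e2, e3, Nat.factorial_succ, pow_succ]
      have hk : ((k : ℂ) + 1) ≠ 0 := by
        have := Nat.cast_ne_zero (R := ℂ).mpr (Nat.succ_ne_zero k)
        push_cast at this
        exact this
      have hf := factC_ne k
      push_cast
      field_simp
      ring

/-- Down-ratio identity: `y i j = r * y (i+1) j`. -/
lemma keyD (m : ℕ) (c : ℂ) (i j : ℕ) (hi : 1 ≤ i) (him : i + 1 ≤ m) (hj : 1 ≤ j)
    (hjm : j ≤ m) :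
    Ysol m c i j =
      (if i + j ≤ m then (i : ℂ) else (i : ℂ) - (m : ℂ)) * Ysol m c (i + 1) j := by
  obtain ⟨a, rfl⟩ : ∃ a, i = a + 1 := ⟨i - 1, by omega⟩
  obtain ⟨b, rfl⟩ : ∃ b, j = b + 1 := ⟨j - 1, by omega⟩
  unfold Ysol
  by_cases h1 : a + 1 + 1 + (b + 1) ≤ m
  · have h2 : a + 1 + (b + 1) ≤ m := by omega
    rw [if_pos h1, if_pos h2, if_pos h2]
    simp only [Nat.add_sub_cancel]
    rw [Nat.factorial_succ]
    have ha : ((Nat.factorial a : ℕ) : ℂ) ≠ 0 := factC_ne a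
    have ha' : ((a : ℂ) + 1) ≠ 0 := by
      have := Nat.cast_ne_zero (R := ℂ).mpr (Nat.succ_ne_zero a)
      push_cast at this
      exact this
    push_cast
    field_simp
  · by_cases h2 : a + 1 + (b + 1) ≤ m
    · -- anti-diagonal crossing : a + b + 2 = m
      have hmeq : m = a + b + 2 := by omega
      subst hmeq
      rw [if_neg h1, if_pos h2, if_pos h2]
      simp only [Nat.add_sub_cancel]
      have e1 : a + b + 2 - (a + 1 + 1) = b := by omega
      have e2 : a + b + 2 - (b + 1) = a + 1 := by omega
      have e3 : a + 1 + 1 + (b + 1) = (a + b + 2) + 1 := by omega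
      rw [e1, e2, e3, Nat.factorial_succ]
      have hb : ((Nat.factorial b : ℕ) : ℂ) ≠ 0 := factC_ne b
      have ha : ((Nat.factorial a : ℕ) : ℂ) ≠ 0 := factC_ne a
      have ha' : ((a : ℂ) + 1) ≠ 0 := by
        have := Nat.cast_ne_zero (R := ℂ).mpr (Nat.succ_ne_zero a)
        push_cast at this
        exact this
      push_cast
      field_simp
    · -- both below the anti-diagonal
      obtain ⟨k, rfl⟩ : ∃ k, m = a + 1 + 1 + k := ⟨m - (a + 1 + 1), by omega⟩
      rw [if_neg h1, if_neg h2, if_neg h2]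
      have e1 : a + 1 + 1 + k - (a + 1 + 1) = k := by omega
      have e2 : a + 1 + 1 + k - (a + 1) = k + 1 := by omega
      have e3 : a + 1 + 1 + (b + 1) = (a + 1 + (b + 1)) + 1 := by omega
      rw [e1, e2, e3, Nat.factorial_succ, pow_succ]
      push_cast
      ring

lemma extY_in (m : ℕ) (y : ℕ → ℕ → ℂ) (i j : ℕ) (h1 : 1 ≤ i) (h2 : i ≤ m)
    (h3 : 1 ≤ j) (h4 : j ≤ m) : extY m y i j = y i j := if_pos ⟨h1, h3, h2, h4⟩

/-- For every nonzero complex number `c`, there exists a tuple of nonzero complex numbers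
solving `ℓ_{(i,j)}(y) = 0` on `B(m)`, with `y_{i,j}·y_{j,i} = c²`, `y_{m,m} = c` and
`y_{i,i} = ±c` for `1 ≤ i < m`. -/
theorem exists_symmetric_solution (m : ℕ) (hm : 2 ≤ m) (c : ℂ) (hc : c ≠ 0) :
    ∃ y : ℕ → ℕ → ℂ,
      (∀ i j, 1 ≤ i → i ≤ m → 1 ≤ j → j ≤ m → y i j ≠ 0) ∧
      (∀ i j, 1 ≤ i → i ≤ m → 1 ≤ j → j ≤ m → ell m y i j = 0) ∧
      (∀ i j, 1 ≤ i → i ≤ m → 1 ≤ j → j ≤ m → y i j * y j i = c ^ 2) ∧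
      y m m = c ∧
      (∀ i, 1 ≤ i → i < m → y i i = c ∨ y i i = -c) := by
  refine ⟨Ysol m c, fun i j _ _ _ _ => Ysol_ne_zero hc i j, ?_, ?_, ?_, ?_⟩
  · -- the equations
    intro i j hi1 him hj1 hjm
    obtain ⟨a, rfl⟩ : ∃ a, i = a + 1 := ⟨i - 1, by omega⟩
    obtain ⟨b, rfl⟩ : ∃ b, j = b + 1 := ⟨j - 1, by omega⟩
    unfold ell
    simp only [Nat.add_sub_cancel]
    have T1 : extY m (Ysol m c) (a + 1) (b + 1 + 1) / extY m (Ysol m c) (a + 1) (b + 1) =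
        ((if b + 1 + 1 ≤ m then
          (if a + 1 + (b + 1) ≤ m then ((b : ℤ) + 1) else ((b : ℤ) + 1) - (m : ℤ))
        else 0 : ℤ) : ℂ) := by
      by_cases h : b + 1 + 1 ≤ m
      · rw [if_pos h, extY_in m _ _ _ (by omega) (by omega) (by omega) h,
          extY_in m _ _ _ (by omega) (by omega) (by omega) (by omega),
          keyR m c (a + 1) (b + 1) (by omega) (by omega) (by omega) h,
          mul_div_assoc, div_self (Ysol_ne_zero hc _ _), mul_one]
        by_cases h2 : a + 1 + (b + 1) ≤ m
        · rw [if_pos h2, if_pos h2]; push_cast; ring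
        · rw [if_neg h2, if_neg h2]; push_cast; ring
      · rw [if_neg h]
        have hz : extY m (Ysol m c) (a + 1) (b + 1 + 1) = 0 :=
          if_neg (fun hh => h hh.2.2.2)
        rw [hz, zero_div]; norm_num
    have T2 : extY m (Ysol m c) a (b + 1) / extY m (Ysol m c) (a + 1) (b + 1) =
        ((if 1 ≤ a then
          (if a + (b + 1) ≤ m then (a : ℤ) else (a : ℤ) - (m : ℤ))
        else 0 : ℤ) : ℂ) := by
      by_cases h : 1 ≤ a
      · rw [if_pos h, extY_in m _ _ _ h (by omega) (by omega) (by omega),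
          extY_in m _ _ _ (by omega) (by omega) (by omega) (by omega),
          keyD m c a (b + 1) h (by omega) (by omega) (by omega),
          mul_div_assoc, div_self (Ysol_ne_zero hc _ _), mul_one]
        by_cases h2 : a + (b + 1) ≤ m
        · rw [if_pos h2, if_pos h2]; push_cast; ring
        · rw [if_neg h2, if_neg h2]; push_cast; ring
      · rw [if_neg h]
        have hz : extY m (Ysol m c) a (b + 1) = 0 :=
          if_neg (fun hh => h hh.1)
        rw [hz, zero_div]; norm_num
    have T3 : extY m (Ysol m c) (a + 1) (b + 1) / extY m (Ysol m c) (a + 1 + 1) (b + 1) =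
        ((if a + 1 + 1 ≤ m then
          (if a + 1 + (b + 1) ≤ m then ((a : ℤ) + 1) else ((a : ℤ) + 1) - (m : ℤ))
        else 0 : ℤ) : ℂ) := by
      by_cases h : a + 1 + 1 ≤ m
      · rw [if_pos h, extY_in m _ _ _ (by omega) (by omega) (by omega) (by omega),
          extY_in m _ _ _ (by omega) h (by omega) (by omega),
          keyD m c (a + 1) (b + 1) (by omega) h (by omega) (by omega),
          mul_div_assoc, div_self (Ysol_ne_zero hc _ _), mul_one]
        by_cases h2 : a + 1 + (b + 1) ≤ m
        · rw [if_pos h2, if_pos h2]; push_cast; ring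
        · rw [if_neg h2, if_neg h2]; push_cast; ring
      · rw [if_neg h]
        have hz : extY m (Ysol m c) (a + 1 + 1) (b + 1) = 0 :=
          if_neg (fun hh => h hh.2.2.1)
        rw [hz, div_zero]; norm_num
    have T4 : extY m (Ysol m c) (a + 1) (b + 1) / extY m (Ysol m c) (a + 1) b =
        ((if 1 ≤ b then
          (if a + 1 + b ≤ m then (b : ℤ) else (b : ℤ) - (m : ℤ))
        else 0 : ℤ) : ℂ) := by
      by_cases h : 1 ≤ b
      · rw [extY_in m _ _ _ (by omega) (by omega) (by omega) (by omega),
          extY_in m _ _ _ (by omega) (by omega) h (by omega), if_pos h,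
          keyR m c (a + 1) b (by omega) (by omega) h (by omega),
          mul_div_assoc, div_self (Ysol_ne_zero hc _ _), mul_one]
        by_cases h2 : a + 1 + b ≤ m
        · rw [if_pos h2, if_pos h2]; push_cast; ring
        · rw [if_neg h2, if_neg h2]; push_cast; ring
      · rw [if_neg h]
        have hz : extY m (Ysol m c) (a + 1) b = 0 :=
          if_neg (fun hh => h hh.2.1)
        rw [hz, div_zero]; norm_num
    rw [neg_div, T1, T2, T3, T4]
    have hZ : -(if b + 1 + 1 ≤ m then
          (if a + 1 + (b + 1) ≤ m then ((b : ℤ) + 1) else ((b : ℤ) + 1) - (m : ℤ))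
        else 0)
        - (if 1 ≤ a then (if a + (b + 1) ≤ m then (a : ℤ) else (a : ℤ) - (m : ℤ)) else 0)
        + (if a + 1 + 1 ≤ m then
          (if a + 1 + (b + 1) ≤ m then ((a : ℤ) + 1) else ((a : ℤ) + 1) - (m : ℤ))
        else 0)
        + (if 1 ≤ b then (if a + 1 + b ≤ m then (b : ℤ) else (b : ℤ) - (m : ℤ)) else 0)
        = 0 := by
      split_ifs <;> omega
    exact_mod_cast hZ
  · -- the products
    intro i j hi1 him hj1 hjm
    unfold Ysol
    by_cases h : i + j ≤ m
    · have h' : j + i ≤ m := by omega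
      rw [if_pos h, if_pos h']
      have hi : ((Nat.factorial (i - 1) : ℕ) : ℂ) ≠ 0 := factC_ne _
      have hj : ((Nat.factorial (j - 1) : ℕ) : ℂ) ≠ 0 := factC_ne _
      have hK : ((-1 : ℂ)) ^ (m + 1) * ((-1 : ℂ)) ^ (m + 1) = 1 := by
        rw [← pow_add]
        exact Even.neg_one_pow ⟨m + 1, by ring⟩
      field_simp
      linear_combination hK
    · have h' : ¬ (j + i ≤ m) := by omega
      rw [if_neg h, if_neg h']
      have hi : ((Nat.factorial (m - i) : ℕ) : ℂ) ≠ 0 := factC_ne _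
      have hj : ((Nat.factorial (m - j) : ℕ) : ℂ) ≠ 0 := factC_ne _
      have hK : ((-1 : ℂ)) ^ (i + j) * ((-1 : ℂ)) ^ (j + i) = 1 := by
        rw [← pow_add]
        exact Even.neg_one_pow ⟨i + j, by ring⟩
      field_simp
      linear_combination hK
  · -- y m m = c
    unfold Ysol
    rw [if_neg (by omega : ¬ (m + m ≤ m)), Nat.sub_self]
    have hK : ((-1 : ℂ)) ^ (m + m) = 1 := Even.neg_one_pow ⟨m, rfl⟩
    rw [hK]
    norm_num [Nat.factorial]
  · -- diagonal
    intro i hi1 him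
    unfold Ysol
    by_cases h : i + i ≤ m
    · rw [if_pos h, mul_div_assoc, div_self (factC_ne _), mul_one]
      rcases Nat.even_or_odd (m + 1) with he | ho
      · left
        rw [he.neg_one_pow, one_mul]
      · right
        rw [ho.neg_one_pow, neg_one_mul]
    · left
      rw [if_neg h, mul_div_assoc, div_self (factC_ne _), mul_one]
      have hK : ((-1 : ℂ)) ^ (i + i) = 1 := Even.neg_one_pow ⟨i, rfl⟩
      rw [hK, one_mul]
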